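/- Under the kernel setup, for all measurable h, r : X → ℝ such that the map x ↦ ∫ (h(x) − y)² ∂(κ x) is μ-integrable, the RcR risk satisfies R(h,r) ≥ ∫ min(c(x), V(x)) ∂μ(x). -/

import Mathlib

open MeasureTheory ProbabilityTheory

/-- Lower-bound half of Theorem 1 (Bayes optimal solution for regression with cost-based
rejection): under the kernel setup, for all measurable `h, r : X → ℝ` such that
`x ↦ ∫ (h x − y)² ∂(κ x)` is `μ`-integrable, the RcR risk
`R(h,r) = ∫ [if r x > 0 then ∫ (h x − y)² ∂(κ x) else c x] ∂μ` satisfies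
`R(h,r) ≥ ∫ min (c x) (V x) ∂μ`. -/
theorem rcr_risk_lower_bound {X : Type*} [MeasurableSpace X]
    (μ : Measure X) [IsProbabilityMeasure μ]
    (κ : Kernel X ℝ) [IsMarkovKernel κ]
    (hκ : ∀ᵐ x ∂μ, Integrable (fun y => y ^ 2) (κ x))
    (m V : X → ℝ)
    (hm : ∀ x, m x = ∫ y, y ∂(κ x))
    (hV : ∀ x, V x = ∫ y, (y - m x) ^ 2 ∂(κ x))
    (hVint : Integrable V μ)
    (c : X → ℝ) (hc_meas : Measurable c) (hc_nonneg : ∀ x, 0 ≤ c x)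
    (hc_int : Integrable c μ)
    (h r : X → ℝ) (hh : Measurable h) (hr : Measurable r)
    (hint : Integrable (fun x => ∫ y, (h x - y) ^ 2 ∂(κ x)) μ) :
    ∫ x, min (c x) (V x) ∂μ ≤
      ∫ x, (if 0 < r x then ∫ y, (h x - y) ^ 2 ∂(κ x) else c x) ∂μ := by
  classical
  have hmin_int : Integrable (fun x => min (c x) (V x)) μ := hc_int.inf hVint
  have hs_meas : MeasurableSet {x : X | 0 < r x} := measurableSet_lt measurable_const hr
  have hif_int : Integrable
      (fun x => if 0 < r x then ∫ y, (h x - y) ^ 2 ∂(κ x) else c x) μ := by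
    have := Integrable.piecewise (s := {x : X | 0 < r x})
      (f := fun x => ∫ y, (h x - y) ^ 2 ∂(κ x)) (g := c)
      hs_meas hint.integrableOn hc_int.integrableOn
    refine this.congr (Filter.Eventually.of_forall fun x => ?_)
    by_cases hx : 0 < r x
    · rw [Set.piecewise_eq_of_mem _ _ _ (by exact hx)]; simp [hx]
    · rw [Set.piecewise_eq_of_notMem _ _ _ (by exact hx)]; simp [hx]
  refine integral_mono_ae hmin_int hif_int ?_
  filter_upwards [hκ] with x hx
  by_cases hrx : 0 < r x
  · simp only [hrx, if_true]
    refine le_trans (min_le_right _ _) ?_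
    -- bias-variance: V x ≤ ∫ (h x - y)^2
    have hy2 : Integrable (fun y => y ^ 2) (κ x) := hx
    have hy : Integrable (fun y : ℝ => y) (κ x) := by
      refine Integrable.mono' (hy2.add (integrable_const 1))
        aestronglyMeasurable_id ?_
      filter_upwards with y
      have : |y| ≤ y ^ 2 + 1 := by nlinarith [abs_nonneg y, sq_abs y]
      simpa [Real.norm_eq_abs] using this
    have h1 : Integrable (fun y : ℝ => (y - m x) ^ 2) (κ x) := by
      have : (fun y : ℝ => (y - m x) ^ 2)
          = fun y => y ^ 2 + ((-2 * m x) * y + (m x) ^ 2) := by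
        funext y; ring
      rw [this]
      exact hy2.add ((hy.const_mul _).add (integrable_const _))
    have h2 : Integrable (fun y : ℝ => 2 * (m x - y) * (h x - m x)) (κ x) := by
      have : (fun y : ℝ => 2 * (m x - y) * (h x - m x))
          = fun y => (-2 * (h x - m x)) * y + 2 * m x * (h x - m x) := by
        funext y; ring
      rw [this]
      exact (hy.const_mul _).add (integrable_const _)
    have hsplit : (fun y : ℝ => (h x - y) ^ 2)
        = fun y => (y - m x) ^ 2 + (2 * (m x - y) * (h x - m x) + (h x - m x) ^ 2) := by
      funext y; ring
    have hcross : (∫ y, 2 * (m x - y) * (h x - m x) ∂(κ x)) = 0 := by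
      have : (fun y : ℝ => 2 * (m x - y) * (h x - m x))
          = fun y => (m x - y) * (2 * (h x - m x)) := by funext y; ring
      rw [this, integral_mul_const, integral_sub (integrable_const _) hy,
        integral_const]
      simp [hm x]
    calc V x = ∫ y, (y - m x) ^ 2 ∂(κ x) := hV x
      _ ≤ ∫ y, (y - m x) ^ 2 ∂(κ x) + (h x - m x) ^ 2 := le_add_of_nonneg_right (sq_nonneg _)
      _ = ∫ y, (h x - y) ^ 2 ∂(κ x) := by
          have h3 : Integrable
              (fun y : ℝ => 2 * (m x - y) * (h x - m x) + (h x - m x) ^ 2) (κ x) :=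
            h2.add (integrable_const _)
          rw [hsplit, integral_add h1 h3, integral_add h2 (integrable_const _),
            hcross, integral_const]
          simp
  · simp only [hrx, if_false]
    exact min_le_left _ _
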